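/- Let L : Θ × Z × Ξ → ℝ be L-smooth, μ_ζ-strongly concave in ζ ∈ Z, and μ_ξ-strongly convex in ξ ∈ Ξ, with Z, Ξ convex and compact. For each θ let (ζ*(θ), ξ*(θ)) denote the unique saddle point of max_{ζ∈Z} min_{ξ∈Ξ} L(θ, ζ, ξ). Then ζ* and ξ* are Lipschitz in θ: ‖ζ*(θ₁) − ζ*(θ₂)‖ ≤ κ_ζ(κ_ξ + 1)‖θ₁ − θ₂‖ and ‖ξ*(θ₁) − ξ*(θ₂)‖ ≤ κ_ξ(κ_ζ + 1)‖θ₁ − θ₂‖, where κ_ζ = L/μ_ζ and κ_ξ = L/μ_ξ. -/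

import Mathlib

lemma stmt18_scalar (Lc μ1 μ2 a b t : ℝ) (hLc : 0 < Lc) (h1 : 0 < μ1) (h2 : 0 < μ2)
    (ha : 0 ≤ a) (hb : 0 ≤ b) (ht : 0 ≤ t)
    (hkey : μ1 * a ^ 2 + μ2 * b ^ 2 ≤ Lc * t * a + Lc * t * b)
    (hμ1 : a ≠ 0 → μ1 ≤ Lc) (hμ2 : b ≠ 0 → μ2 ≤ Lc) :
    a ≤ (Lc / μ1) * (Lc / μ2 + 1) * t := by
  rcases eq_or_lt_of_le ha with h | hpos
  · rw [← h]; positivity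
  have hμ1' : μ1 ≤ Lc := hμ1 (ne_of_gt hpos)
  have hquad : 4 * μ2 * (μ1 * a ^ 2) ≤ 4 * μ2 * (Lc * t * a) + Lc ^ 2 * t ^ 2 := by
    nlinarith [sq_nonneg (2 * μ2 * b - Lc * t),
      mul_le_mul_of_nonneg_left hkey (by positivity : (0:ℝ) ≤ 4 * μ2)]
  have hcoef : (1:ℝ) ≤ (Lc / μ1) * (Lc / μ2 + 1) := by
    have h1' : (1:ℝ) ≤ Lc / μ1 := (one_le_div h1).2 hμ1'
    have h2' : (1:ℝ) ≤ Lc / μ2 + 1 := le_add_of_nonneg_left (by positivity)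
    nlinarith
  by_cases hta : a ≤ t
  · calc a ≤ t := hta
      _ = 1 * t := (one_mul t).symm
      _ ≤ (Lc / μ1) * (Lc / μ2 + 1) * t := by
          exact mul_le_mul_of_nonneg_right hcoef ht
  · push_neg at hta
    have hgoal' : μ1 * μ2 * a ≤ Lc * (Lc + μ2) * t := by
      have htta : t ^ 2 ≤ t * a := by nlinarith
      have h5 : (4 * μ2 * μ1 * a) * a ≤ ((4 * μ2 * Lc + Lc ^ 2) * t) * a := by
        nlinarith [mul_le_mul_of_nonneg_left htta (by positivity : (0:ℝ) ≤ Lc ^ 2)]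
      have h6 : 4 * μ2 * μ1 * a ≤ (4 * μ2 * Lc + Lc ^ 2) * t :=
        le_of_mul_le_mul_right h5 hpos
      nlinarith [mul_nonneg (mul_nonneg hLc.le hLc.le) ht]
    have heq : (Lc / μ1) * (Lc / μ2 + 1) * t = (Lc * (Lc + μ2) * t) / (μ1 * μ2) := by
      field_simp; try ring
    rw [heq, le_div_iff₀ (by positivity)]
    linarith [hgoal']


/-- If `L(θ,ζ,ξ)` is `L`-smooth, `μζ`-strongly concave in `ζ ∈ Z` and
`μξ`-strongly convex in `ξ ∈ Ξ` (`Z`, `Ξ` convex compact), then the saddle-point maps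
`θ ↦ ζ*(θ)`, `θ ↦ ξ*(θ)` are Lipschitz with constants `κζ(κξ+1)` and `κξ(κζ+1)`,
where `κζ = L/μζ` and `κξ = L/μξ`. -/
theorem stmt18 {dθ dζ dξ : ℕ}
    (Z : Set (EuclideanSpace ℝ (Fin dζ))) (Ξ : Set (EuclideanSpace ℝ (Fin dξ)))
    (hZ : Convex ℝ Z) (hΞ : Convex ℝ Ξ) (hZc : IsCompact Z) (hΞc : IsCompact Ξ)
    (L : EuclideanSpace ℝ (Fin dθ) → EuclideanSpace ℝ (Fin dζ) →
      EuclideanSpace ℝ (Fin dξ) → ℝ)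
    (gζ : EuclideanSpace ℝ (Fin dθ) → EuclideanSpace ℝ (Fin dζ) →
      EuclideanSpace ℝ (Fin dξ) → EuclideanSpace ℝ (Fin dζ))
    (gξ : EuclideanSpace ℝ (Fin dθ) → EuclideanSpace ℝ (Fin dζ) →
      EuclideanSpace ℝ (Fin dξ) → EuclideanSpace ℝ (Fin dξ))
    (Lc μζ μξ : ℝ) (hLc : 0 < Lc) (hμζ : 0 < μζ) (hμξ : 0 < μξ)
    (hsmoothζ : ∀ θ₁ θ₂ ζ₁ ζ₂ ξ₁ ξ₂,
      ‖gζ θ₁ ζ₁ ξ₁ - gζ θ₂ ζ₂ ξ₂‖ ≤ Lc * (‖θ₁ - θ₂‖ + ‖ζ₁ - ζ₂‖ + ‖ξ₁ - ξ₂‖))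
    (hsmoothξ : ∀ θ₁ θ₂ ζ₁ ζ₂ ξ₁ ξ₂,
      ‖gξ θ₁ ζ₁ ξ₁ - gξ θ₂ ζ₂ ξ₂‖ ≤ Lc * (‖θ₁ - θ₂‖ + ‖ζ₁ - ζ₂‖ + ‖ξ₁ - ξ₂‖))
    (hconc : ∀ θ ξ, ∀ ζ₁ ∈ Z, ∀ ζ₂ ∈ Z,
      -L θ ζ₂ ξ ≥ -L θ ζ₁ ξ - inner ℝ (gζ θ ζ₁ ξ) (ζ₂ - ζ₁) + μζ / 2 * ‖ζ₂ - ζ₁‖ ^ 2)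
    (hconv : ∀ θ ζ, ∀ ξ₁ ∈ Ξ, ∀ ξ₂ ∈ Ξ,
      L θ ζ ξ₂ ≥ L θ ζ ξ₁ + inner ℝ (gξ θ ζ ξ₁) (ξ₂ - ξ₁) + μξ / 2 * ‖ξ₂ - ξ₁‖ ^ 2)
    (ζstar : EuclideanSpace ℝ (Fin dθ) → EuclideanSpace ℝ (Fin dζ))
    (ξstar : EuclideanSpace ℝ (Fin dθ) → EuclideanSpace ℝ (Fin dξ))
    (hζmem : ∀ θ, ζstar θ ∈ Z) (hξmem : ∀ θ, ξstar θ ∈ Ξ)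
    (hζopt : ∀ θ, ∀ ζ ∈ Z, inner ℝ (gζ θ (ζstar θ) (ξstar θ)) (ζ - ζstar θ) ≤ (0 : ℝ))
    (hξopt : ∀ θ, ∀ ξ ∈ Ξ, (0 : ℝ) ≤ inner ℝ (gξ θ (ζstar θ) (ξstar θ)) (ξ - ξstar θ)) :
    ∀ θ₁ θ₂ : EuclideanSpace ℝ (Fin dθ),
      ‖ζstar θ₁ - ζstar θ₂‖ ≤ (Lc / μζ) * (Lc / μξ + 1) * ‖θ₁ - θ₂‖ ∧
      ‖ξstar θ₁ - ξstar θ₂‖ ≤ (Lc / μξ) * (Lc / μζ + 1) * ‖θ₁ - θ₂‖ := by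
  intro θ₁ θ₂
  set ζ₁ := ζstar θ₁ with hζ₁
  set ζ₂ := ζstar θ₂ with hζ₂
  set ξ₁ := ξstar θ₁ with hξ₁
  set ξ₂ := ξstar θ₂ with hξ₂
  set a := ‖ζ₁ - ζ₂‖ with ha_def
  set b := ‖ξ₁ - ξ₂‖ with hb_def
  set t := ‖θ₁ - θ₂‖ with ht_def
  have ha : 0 ≤ a := norm_nonneg _
  have hb : 0 ≤ b := norm_nonneg _
  have ht : 0 ≤ t := norm_nonneg _
  -- joint strong monotonicity of the saddle operator at θ₂
  have hmono : μζ * a ^ 2 + μξ * b ^ 2 ≤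
      (inner ℝ (gζ θ₂ ζ₂ ξ₂) (ζ₁ - ζ₂) - inner ℝ (gζ θ₂ ζ₁ ξ₁) (ζ₁ - ζ₂)) +
      (inner ℝ (gξ θ₂ ζ₁ ξ₁) (ξ₁ - ξ₂) - inner ℝ (gξ θ₂ ζ₂ ξ₂) (ξ₁ - ξ₂)) := by
    have h1 := hconc θ₂ ξ₁ ζ₁ (hζmem θ₁) ζ₂ (hζmem θ₂)
    have h2 := hconc θ₂ ξ₂ ζ₂ (hζmem θ₂) ζ₁ (hζmem θ₁)
    have h3 := hconv θ₂ ζ₁ ξ₁ (hξmem θ₁) ξ₂ (hξmem θ₂)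
    have h4 := hconv θ₂ ζ₂ ξ₂ (hξmem θ₂) ξ₁ (hξmem θ₁)
    have eζ : ζ₂ - ζ₁ = -(ζ₁ - ζ₂) := by abel
    have eξ : ξ₂ - ξ₁ = -(ξ₁ - ξ₂) := by abel
    rw [eζ, inner_neg_right, norm_neg] at h1
    rw [eξ, inner_neg_right, norm_neg] at h3
    linarith
  -- bound the ζ part using optimality + smoothness
  have hζbound : (inner ℝ (gζ θ₂ ζ₂ ξ₂) (ζ₁ - ζ₂) : ℝ) - inner ℝ (gζ θ₂ ζ₁ ξ₁) (ζ₁ - ζ₂)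
      ≤ Lc * t * a := by
    have hv1 : (inner ℝ (gζ θ₂ ζ₂ ξ₂) (ζ₁ - ζ₂) : ℝ) ≤ 0 := hζopt θ₂ ζ₁ (hζmem θ₁)
    have hv2 : (0 : ℝ) ≤ inner ℝ (gζ θ₁ ζ₁ ξ₁) (ζ₁ - ζ₂) := by
      have h := hζopt θ₁ ζ₂ (hζmem θ₂)
      have e : ζ₂ - ζ₁ = -(ζ₁ - ζ₂) := by abel
      rw [e, inner_neg_right] at h
      linarith
    have hcs : (inner ℝ (gζ θ₁ ζ₁ ξ₁ - gζ θ₂ ζ₁ ξ₁) (ζ₁ - ζ₂) : ℝ) ≤ Lc * t * a := by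
      calc (inner ℝ (gζ θ₁ ζ₁ ξ₁ - gζ θ₂ ζ₁ ξ₁) (ζ₁ - ζ₂) : ℝ)
          ≤ ‖gζ θ₁ ζ₁ ξ₁ - gζ θ₂ ζ₁ ξ₁‖ * ‖ζ₁ - ζ₂‖ := real_inner_le_norm _ _
        _ ≤ (Lc * (‖θ₁ - θ₂‖ + ‖ζ₁ - ζ₁‖ + ‖ξ₁ - ξ₁‖)) * ‖ζ₁ - ζ₂‖ :=
            mul_le_mul_of_nonneg_right (hsmoothζ θ₁ θ₂ ζ₁ ζ₁ ξ₁ ξ₁) (norm_nonneg _)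
        _ = Lc * t * a := by simp [ht_def, ha_def]
    rw [inner_sub_left] at hcs
    linarith
  -- bound the ξ part using optimality + smoothness
  have hξbound : (inner ℝ (gξ θ₂ ζ₁ ξ₁) (ξ₁ - ξ₂) : ℝ) - inner ℝ (gξ θ₂ ζ₂ ξ₂) (ξ₁ - ξ₂)
      ≤ Lc * t * b := by
    have hv1 : (0 : ℝ) ≤ inner ℝ (gξ θ₂ ζ₂ ξ₂) (ξ₁ - ξ₂) := hξopt θ₂ ξ₁ (hξmem θ₁)
    have hv2 : (inner ℝ (gξ θ₁ ζ₁ ξ₁) (ξ₁ - ξ₂) : ℝ) ≤ 0 := by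
      have h := hξopt θ₁ ξ₂ (hξmem θ₂)
      have e : ξ₂ - ξ₁ = -(ξ₁ - ξ₂) := by abel
      rw [e, inner_neg_right] at h
      linarith
    have hcs : (inner ℝ (gξ θ₂ ζ₁ ξ₁ - gξ θ₁ ζ₁ ξ₁) (ξ₁ - ξ₂) : ℝ) ≤ Lc * t * b := by
      calc (inner ℝ (gξ θ₂ ζ₁ ξ₁ - gξ θ₁ ζ₁ ξ₁) (ξ₁ - ξ₂) : ℝ)
          ≤ ‖gξ θ₂ ζ₁ ξ₁ - gξ θ₁ ζ₁ ξ₁‖ * ‖ξ₁ - ξ₂‖ := real_inner_le_norm _ _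
        _ ≤ (Lc * (‖θ₂ - θ₁‖ + ‖ζ₁ - ζ₁‖ + ‖ξ₁ - ξ₁‖)) * ‖ξ₁ - ξ₂‖ :=
            mul_le_mul_of_nonneg_right (hsmoothξ θ₂ θ₁ ζ₁ ζ₁ ξ₁ ξ₁) (norm_nonneg _)
        _ = Lc * t * b := by rw [norm_sub_rev θ₂ θ₁]; simp [ht_def, hb_def]
    rw [inner_sub_left] at hcs
    linarith
  have hkey : μζ * a ^ 2 + μξ * b ^ 2 ≤ Lc * t * a + Lc * t * b := by linarith
  -- μζ ≤ Lc whenever a ≠ 0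
  have hμζLc : a ≠ 0 → μζ ≤ Lc := by
    intro hne
    have hpos : 0 < a := lt_of_le_of_ne ha (Ne.symm hne)
    have h1 := hconc θ₁ ξ₁ ζ₁ (hζmem θ₁) ζ₂ (hζmem θ₂)
    have h2 := hconc θ₁ ξ₁ ζ₂ (hζmem θ₂) ζ₁ (hζmem θ₁)
    have eζ : ζ₂ - ζ₁ = -(ζ₁ - ζ₂) := by abel
    rw [eζ, inner_neg_right, norm_neg] at h1
    have hmon : μζ * a ^ 2 ≤
        (inner ℝ (gζ θ₁ ζ₂ ξ₁) (ζ₁ - ζ₂) : ℝ) - inner ℝ (gζ θ₁ ζ₁ ξ₁) (ζ₁ - ζ₂) := by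
      linarith
    have hcs : (inner ℝ (gζ θ₁ ζ₂ ξ₁ - gζ θ₁ ζ₁ ξ₁) (ζ₁ - ζ₂) : ℝ) ≤ Lc * a * a := by
      calc (inner ℝ (gζ θ₁ ζ₂ ξ₁ - gζ θ₁ ζ₁ ξ₁) (ζ₁ - ζ₂) : ℝ)
          ≤ ‖gζ θ₁ ζ₂ ξ₁ - gζ θ₁ ζ₁ ξ₁‖ * ‖ζ₁ - ζ₂‖ := real_inner_le_norm _ _
        _ ≤ (Lc * (‖θ₁ - θ₁‖ + ‖ζ₂ - ζ₁‖ + ‖ξ₁ - ξ₁‖)) * ‖ζ₁ - ζ₂‖ :=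
            mul_le_mul_of_nonneg_right (hsmoothζ θ₁ θ₁ ζ₂ ζ₁ ξ₁ ξ₁) (norm_nonneg _)
        _ = Lc * a * a := by rw [norm_sub_rev ζ₂ ζ₁]; simp [ha_def]
    rw [inner_sub_left] at hcs
    nlinarith [mul_pos hpos hpos]
  -- μξ ≤ Lc whenever b ≠ 0
  have hμξLc : b ≠ 0 → μξ ≤ Lc := by
    intro hne
    have hpos : 0 < b := lt_of_le_of_ne hb (Ne.symm hne)
    have h3 := hconv θ₁ ζ₁ ξ₁ (hξmem θ₁) ξ₂ (hξmem θ₂)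
    have h4 := hconv θ₁ ζ₁ ξ₂ (hξmem θ₂) ξ₁ (hξmem θ₁)
    have eξ : ξ₂ - ξ₁ = -(ξ₁ - ξ₂) := by abel
    rw [eξ, inner_neg_right, norm_neg] at h3
    have hmon : μξ * b ^ 2 ≤
        (inner ℝ (gξ θ₁ ζ₁ ξ₁) (ξ₁ - ξ₂) : ℝ) - inner ℝ (gξ θ₁ ζ₁ ξ₂) (ξ₁ - ξ₂) := by
      linarith
    have hcs : (inner ℝ (gξ θ₁ ζ₁ ξ₁ - gξ θ₁ ζ₁ ξ₂) (ξ₁ - ξ₂) : ℝ) ≤ Lc * b * b := by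
      calc (inner ℝ (gξ θ₁ ζ₁ ξ₁ - gξ θ₁ ζ₁ ξ₂) (ξ₁ - ξ₂) : ℝ)
          ≤ ‖gξ θ₁ ζ₁ ξ₁ - gξ θ₁ ζ₁ ξ₂‖ * ‖ξ₁ - ξ₂‖ := real_inner_le_norm _ _
        _ ≤ (Lc * (‖θ₁ - θ₁‖ + ‖ζ₁ - ζ₁‖ + ‖ξ₁ - ξ₂‖)) * ‖ξ₁ - ξ₂‖ :=
            mul_le_mul_of_nonneg_right (hsmoothξ θ₁ θ₁ ζ₁ ζ₁ ξ₁ ξ₂) (norm_nonneg _)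
        _ = Lc * b * b := by simp [hb_def]
    rw [inner_sub_left] at hcs
    nlinarith [mul_pos hpos hpos]
  constructor
  · exact stmt18_scalar Lc μζ μξ a b t hLc hμζ hμξ ha hb ht hkey hμζLc hμξLc
  · exact stmt18_scalar Lc μξ μζ b a t hLc hμξ hμζ hb ha ht (by linarith) hμξLc hμζLc
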